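/- arXiv:2404.09363 — 2 statements merged into one kernel-verified Lean document; each statement's English description precedes it below -/
import Mathlib

section
/- Rodrigues' formula: for every nonzero vector x ∈ ℝ³ with ω = ‖x‖, the matrix exponential of its hat matrix satisfies exp(x̂) = I + (sin ω / ω) x̂ + ((1 − cos ω)/ω²) x̂². -/
open Matrix Real

noncomputable section

/-- The hat map sending `x ∈ ℝ³` to the skew-symmetric matrix `x̂` with `x̂ y = x × y`. -/
def hat (x : EuclideanSpace ℝ (Fin 3)) : Matrix (Fin 3) (Fin 3) ℝ :=
  !![0, -x 2, x 1; x 2, 0, -x 0; -x 1, x 0, 0]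

lemma norm_sq_eq (x : EuclideanSpace ℝ (Fin 3)) :
    ‖x‖ ^ 2 = x 0 ^ 2 + x 1 ^ 2 + x 2 ^ 2 := by
  rw [EuclideanSpace.norm_eq, Real.sq_sqrt (by positivity)]
  simp [Fin.sum_univ_three, sq_abs]

lemma hat_cube (x : EuclideanSpace ℝ (Fin 3)) :
    hat x ^ 3 = (-‖x‖ ^ 2) • hat x := by
  rw [norm_sq_eq]
  ext i j
  fin_cases i <;> fin_cases j <;>
    simp [hat, pow_succ, Matrix.mul_apply, Fin.sum_univ_three] <;> ring

lemma hat_odd_pow (x : EuclideanSpace ℝ (Fin 3)) (k : ℕ) :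
    hat x ^ (2 * k + 1) = ((-1 : ℝ) ^ k * ‖x‖ ^ (2 * k)) • hat x := by
  induction k with
  | zero => simp
  | succ k ih =>
    have h : 2 * (k + 1) + 1 = (2 * k + 1) + 2 := by ring
    rw [h, pow_add, ih, smul_mul_assoc, ← pow_succ', hat_cube, smul_smul]
    congr 1
    ring

lemma hat_even_pow (x : EuclideanSpace ℝ (Fin 3)) (k : ℕ) :
    hat x ^ (2 * k + 2) = ((-1 : ℝ) ^ k * ‖x‖ ^ (2 * k)) • hat x ^ 2 := by
  have : 2 * k + 2 = (2 * k + 1) + 1 := by ring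
  rw [this, pow_add, hat_odd_pow, smul_mul_assoc, pow_one, ← pow_two]

/-- Rodrigues' formula: for `x ≠ 0` with `ω = ‖x‖`,
`exp(x̂) = I + (sin ω / ω) x̂ + ((1 − cos ω)/ω²) x̂²`. -/
theorem rodrigues (x : EuclideanSpace ℝ (Fin 3)) (hx : x ≠ 0) :
    NormedSpace.exp (hat x)
      = 1 + (Real.sin ‖x‖ / ‖x‖) • hat x
        + ((1 - Real.cos ‖x‖) / ‖x‖ ^ 2) • hat x ^ 2 := by
  have hω : ‖x‖ ≠ 0 := norm_ne_zero_iff.mpr hx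
  rw [NormedSpace.exp_eq_tsum ℝ]
  refine HasSum.tsum_eq ?_
  rw [add_right_comm]
  refine HasSum.even_add_odd ?_ ?_
  · -- even part: sums to 1 + ((1 - cos ω)/ω²) • A²
    have hc : HasSum (fun n : ℕ => (-1 : ℝ) ^ n * ‖x‖ ^ (2 * n) / ((2 * n).factorial : ℝ))
        (Real.cos ‖x‖) := Real.hasSum_cos ‖x‖
    have hshift : HasSum (fun n : ℕ => (-1 : ℝ) ^ (n + 1) * ‖x‖ ^ (2 * (n + 1)) / ((2 * (n + 1)).factorial : ℝ))
        (Real.cos ‖x‖ - 1) := by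
      refine (hasSum_nat_add_iff (f := fun n : ℕ => (-1 : ℝ) ^ n * ‖x‖ ^ (2 * n) / ((2 * n).factorial : ℝ))
        1).mpr ?_
      simpa using hc
    have hmul := (hshift.mul_left (-1 / ‖x‖ ^ 2)).smul_const (hat x ^ 2)
    have hsum : -1 / ‖x‖ ^ 2 * (Real.cos ‖x‖ - 1) = (1 - Real.cos ‖x‖) / ‖x‖ ^ 2 := by
      field_simp
      ring
    rw [hsum] at hmul
    have hall : HasSum (fun k : ℕ => ((((2 * (k + 1)).factorial : ℝ))⁻¹ • hat x ^ (2 * (k + 1))))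
        (((1 - Real.cos ‖x‖) / ‖x‖ ^ 2) • hat x ^ 2) := by
      convert hmul using 2 with k
      have h2 : 2 * (k + 1) = 2 * k + 2 := by ring
      rw [h2, hat_even_pow, smul_smul]
      congr 1
      have : (‖x‖ : ℝ) ^ (2 * (k + 1)) = ‖x‖ ^ (2 * k) * ‖x‖ ^ 2 := by rw [← pow_add]; ring_nf
      rw [h2] at *
      field_simp
      ring
    have := (hasSum_nat_add_iff
      (f := fun k : ℕ => (((2 * k).factorial : ℝ))⁻¹ • hat x ^ (2 * k)) 1).mp (by simpa using hall)
    convert this using 1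
    · rfl
    simp [add_comm]
  · -- odd part: sums to (sin ω / ω) • A
    have hs : HasSum (fun n : ℕ => (-1 : ℝ) ^ n * ‖x‖ ^ (2 * n + 1) / ((2 * n + 1).factorial : ℝ))
        (Real.sin ‖x‖) := Real.hasSum_sin ‖x‖
    have hmul := (hs.div_const ‖x‖).smul_const (hat x)
    convert hmul using 2 with k
    · rfl
    rw [hat_odd_pow, smul_smul]
    congr 1
    rw [pow_succ]
    field_simp
end
end

section
/- For every vector x ∈ ℝ³ with ‖x‖ < 1, setting γ = 1/(1 + √(1 − ‖x‖²)), the matrix R := I + x̂ + γ x̂² is a rotation: Rᵗ R = I, det(R) = 1, and its skew-symmetric part recovers x̂, i.e. ½(R − Rᵗ) = x̂. In particular (I + γ x̂²)² = I + x̂². -/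
open Matrix Real

noncomputable section

/-- For `‖x‖ < 1` with `γ = 1/(1 + √(1 − ‖x‖²))`, the matrix `R = I + x̂ + γ x̂²`
is a rotation: `Rᵗ R = I`, `det R = 1`, its skew-symmetric part is `x̂`, and
`(I + γ x̂²)² = I + x̂²`. -/
theorem unskew_is_rotation (x : EuclideanSpace ℝ (Fin 3)) (hx : ‖x‖ < 1) :
    (1 + hat x + (1 / (1 + Real.sqrt (1 - ‖x‖ ^ 2))) • hat x ^ 2)ᵀ
        * (1 + hat x + (1 / (1 + Real.sqrt (1 - ‖x‖ ^ 2))) • hat x ^ 2) = 1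
    ∧ (1 + hat x + (1 / (1 + Real.sqrt (1 - ‖x‖ ^ 2))) • hat x ^ 2).det = 1
    ∧ (1 / 2 : ℝ) •
        ((1 + hat x + (1 / (1 + Real.sqrt (1 - ‖x‖ ^ 2))) • hat x ^ 2)
          - (1 + hat x + (1 / (1 + Real.sqrt (1 - ‖x‖ ^ 2))) • hat x ^ 2)ᵀ)
        = hat x
    ∧ (1 + (1 / (1 + Real.sqrt (1 - ‖x‖ ^ 2))) • hat x ^ 2) ^ 2 = 1 + hat x ^ 2 := by
  have hn : ‖x‖ ^ 2 = x 0 ^ 2 + x 1 ^ 2 + x 2 ^ 2 := by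
    rw [EuclideanSpace.norm_eq, Real.sq_sqrt (by positivity)]
    simp [Fin.sum_univ_three, sq_abs]
  have h1 : (0:ℝ) ≤ 1 - ‖x‖ ^ 2 := by nlinarith [norm_nonneg x]
  set s := Real.sqrt (1 - ‖x‖ ^ 2) with hs_def
  have hs0 : 0 ≤ s := Real.sqrt_nonneg _
  have hs2 : s ^ 2 = 1 - (x 0 ^ 2 + x 1 ^ 2 + x 2 ^ 2) := by rw [hs_def, Real.sq_sqrt h1, hn]
  have h1s : (1:ℝ) + s ≠ 0 := by positivity
  set γ : ℝ := 1 / (1 + s) with hγ_def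
  set H := hat x with hH
  -- basic entrywise facts
  have hT : Hᵀ = -H := by
    rw [hH]
    ext i j
    fin_cases i <;> fin_cases j <;> simp [hat]
  have hA : H ^ 2 = !![-(x 1 ^ 2 + x 2 ^ 2), x 0 * x 1, x 0 * x 2;
      x 0 * x 1, -(x 0 ^ 2 + x 2 ^ 2), x 1 * x 2;
      x 0 * x 2, x 1 * x 2, -(x 0 ^ 2 + x 1 ^ 2)] := by
    rw [pow_two, hH]
    ext i j
    fin_cases i <;> fin_cases j <;>
      simp [hat, Matrix.mul_apply, Fin.sum_univ_three] <;> ring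
  have hAT : (H ^ 2)ᵀ = H ^ 2 := by
    rw [pow_two, Matrix.transpose_mul, hT]
    simp
  have h3 : H * H ^ 2 = (-(x 0 ^ 2 + x 1 ^ 2 + x 2 ^ 2)) • H := by
    rw [hA, hH]
    ext i j
    fin_cases i <;> fin_cases j <;>
      simp [hat, Matrix.mul_apply, Fin.sum_univ_three] <;> ring
  have hA2 : H ^ 2 * H ^ 2 = (-(x 0 ^ 2 + x 1 ^ 2 + x 2 ^ 2)) • H ^ 2 := by
    calc H ^ 2 * H ^ 2 = (H * H ^ 2) * H := by noncomm_ring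
    _ = ((-(x 0 ^ 2 + x 1 ^ 2 + x 2 ^ 2)) • H) * H := by rw [h3]
    _ = (-(x 0 ^ 2 + x 1 ^ 2 + x 2 ^ 2)) • H ^ 2 := by rw [smul_mul_assoc, ← pow_two]
  set M := γ • H ^ 2 with hM
  -- transpose of R
  have hRT : (1 + H + M)ᵀ = 1 - H + M := by
    rw [Matrix.transpose_add, Matrix.transpose_add, Matrix.transpose_one, hT, hM,
      Matrix.transpose_smul, hAT]
    abel
  -- the scalar identity
  have hγ1 : γ + γ + γ * γ * (-(x 0 ^ 2 + x 1 ^ 2 + x 2 ^ 2)) = 1 := by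
    rw [hγ_def]
    field_simp
    linear_combination (-(1:ℝ)) * hs2
  -- fourth conjunct
  have hsq : (1 + M) ^ 2 = 1 + H ^ 2 := by
    have e1 : (1 + M) ^ 2 = 1 + (M + M + M * M) := by noncomm_ring
    have e2 : M * M = (γ * γ) • (H ^ 2 * H ^ 2) := by
      rw [hM, smul_mul_assoc, mul_smul_comm, smul_smul]
    have e3 : M + M + M * M = (γ + γ + γ * γ * (-(x 0 ^ 2 + x 1 ^ 2 + x 2 ^ 2))) • H ^ 2 := by
      rw [e2, hA2, hM, smul_smul]
      module
    rw [e1, e3, hγ1, one_smul]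
  -- commutation
  have hc : M * H = H * M := by
    rw [hM, smul_mul_assoc, mul_smul_comm]
    congr 1
    rw [← pow_succ, ← pow_succ']
  -- first conjunct
  have hortho : (1 + H + M)ᵀ * (1 + H + M) = 1 := by
    rw [hRT]
    have e : (1 - H + M) * (1 + H + M)
        = (1 + M) ^ 2 - H ^ 2 + (M * H - H * M) := by noncomm_ring
    rw [e, hc, sub_self, add_zero, hsq]
    abel
  -- determinant
  have hdetp : ∀ g : ℝ, (1 + H + g • H ^ 2).det = (1 - g * (x 0 ^ 2 + x 1 ^ 2 + x 2 ^ 2)) ^ 2 + (x 0 ^ 2 + x 1 ^ 2 + x 2 ^ 2) := by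
    intro g
    have hRg : (1 + H + g • H ^ 2) =
        !![1 - g * (x 1 ^ 2 + x 2 ^ 2), -x 2 + g * (x 0 * x 1), x 1 + g * (x 0 * x 2);
          x 2 + g * (x 0 * x 1), 1 - g * (x 0 ^ 2 + x 2 ^ 2), -x 0 + g * (x 1 * x 2);
          -x 1 + g * (x 0 * x 2), x 0 + g * (x 1 * x 2), 1 - g * (x 0 ^ 2 + x 1 ^ 2)] := by
      rw [hA, hH]
      ext i j
      fin_cases i <;> fin_cases j <;>
        simp [hat, Matrix.one_apply] <;> ring
    rw [hRg, Matrix.det_fin_three]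
    simp
    ring
  have hsd : 1 - γ * (x 0 ^ 2 + x 1 ^ 2 + x 2 ^ 2) = s := by
    rw [hγ_def]
    field_simp
    linear_combination -hs2
  have hdet : (1 + H + M).det = 1 := by
    rw [hM, hdetp γ, hsd]
    linear_combination hs2
  -- third conjunct
  have hskew : (1 / 2 : ℝ) • ((1 + H + M) - (1 + H + M)ᵀ) = H := by
    rw [hRT]
    have e : (1 + H + M) - (1 - H + M) = H + H := by abel
    rw [e, ← two_smul ℝ H, smul_smul]
    norm_num
  exact ⟨hortho, hdet, hskew, hsq⟩
end
end
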